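/- Collision detection matrix is full rank: let n > b and let j_1, ..., j_{2^{n-b}} enumerate a coset {j : H j = k} where H = Psi_b^T Sigma^T, Sigma invertible, and let sigma_1,...,sigma_{n-b} be the first n-b columns of Sigma. Then the real (n-b+1) x 2^{n-b} matrix whose first row is all ones and whose (d+1)-st row has entries (-1)^{<sigma_d, j_m>} has rank n-b+1. -/

import Mathlib

open Matrix Finset

/-- Inner product over `𝔽₂`. -/
def ip {ι : Type*} [Fintype ι] (u v : ι → ZMod 2) : ZMod 2 := ∑ t, u t * v t

/-- `(-1)^b` for `b ∈ 𝔽₂`. -/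
def sgn (a : ZMod 2) : ℝ := (-1 : ℝ) ^ a.val

/-- The Walsh-Hadamard transform. -/
noncomputable def WHT {ι : Type*} [DecidableEq ι] [Fintype ι]
    (x : (ι → ZMod 2) → ℝ) (k : ι → ZMod 2) : ℝ :=
  (Real.sqrt (Fintype.card (ι → ZMod 2)))⁻¹ * ∑ m, sgn (ip k m) * x m

/-- `Ψ_b : 𝔽₂ᵇ → 𝔽₂ⁿ`, placing a `b`-bit vector in the last `b` coordinates. -/
def Psi (n b : ℕ) (hb : b ≤ n) (m : Fin b → ZMod 2) : Fin n → ZMod 2 :=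
  fun i => if _ : (i : ℕ) < n - b then 0 else m ⟨(i : ℕ) - (n - b), by have := i.isLt; omega⟩

/-- `Ψ_bᵀ : 𝔽₂ⁿ → 𝔽₂ᵇ`, extracting the last `b` coordinates. -/
def PsiT (n b : ℕ) (hb : b ≤ n) (j : Fin n → ZMod 2) : Fin b → ZMod 2 :=
  fun t => j ⟨n - b + (t : ℕ), by have := t.isLt; omega⟩

lemma zmod2_cases (a : ZMod 2) : a = 0 ∨ a = 1 := by revert a; decide

lemma sgn_zero : sgn 0 = 1 := by simp [sgn]

lemma sgn_add (a c : ZMod 2) : sgn (a + c) = sgn a * sgn c := by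
  rcases zmod2_cases a with rfl | rfl <;> rcases zmod2_cases c with rfl | rfl <;>
    simp [sgn, ZMod.val_one, show (1 : ZMod 2) + 1 = 0 from rfl]

lemma ip_add_left {ι : Type*} [Fintype ι] (u v w : ι → ZMod 2) :
    ip (u + v) w = ip u w + ip v w := by
  simp [ip, add_mul, Finset.sum_add_distrib]

lemma ip_zero_left {ι : Type*} [Fintype ι] (w : ι → ZMod 2) : ip 0 w = 0 := by
  simp [ip]

lemma ip_single {ι : Type*} [Fintype ι] [DecidableEq ι] (d : ι) (x : ι → ZMod 2) :
    ip (fun t => if t = d then 1 else 0) x = x d := by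
  simp [ip, Finset.sum_ite_eq']

lemma char_sum_zero {ι : Type*} [Fintype ι] [DecidableEq ι] (v : ι → ZMod 2) (hv : v ≠ 0) :
    ∑ x : ι → ZMod 2, sgn (ip v x) = 0 := by
  obtain ⟨t, ht⟩ : ∃ t, v t ≠ 0 := by
    by_contra h; push_neg at h; exact hv (funext h)
  have hvt : v t = 1 := by rcases zmod2_cases (v t) with h | h <;> simp_all
  set δ : ι → ZMod 2 := fun s => if s = t then 1 else 0 with hδ
  have key : ∀ x : ι → ZMod 2, sgn (ip v (x + δ)) = - sgn (ip v x) := by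
    intro x
    have : ip v (x + δ) = ip v x + 1 := by
      have h1 : ip v (x + δ) = ip v x + ip v δ := by
        simp [ip, mul_add, Finset.sum_add_distrib]
      have h2 : ip v δ = 1 := by
        simp [ip, hδ, Finset.sum_ite_eq', hvt]
      rw [h1, h2]
    rw [this, sgn_add]
    have : ZMod.val (1 : ZMod 2) = 1 := rfl
    simp [sgn, this]
  have := Fintype.sum_equiv (Equiv.addRight δ) (fun x => sgn (ip v x))
    (fun x => - sgn (ip v x)) (by intro x; simp [key x])
  have h2 : ∑ x : ι → ZMod 2, sgn (ip v x) = - ∑ x : ι → ZMod 2, sgn (ip v x) := by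
    simpa [Finset.sum_neg_distrib] using this
  linarith [h2]

lemma char_orth {ι : Type*} [Fintype ι] [DecidableEq ι] (v w : ι → ZMod 2) :
    ∑ x : ι → ZMod 2, sgn (ip v x) * sgn (ip w x)
      = if v = w then (Fintype.card (ι → ZMod 2) : ℝ) else 0 := by
  have hs : ∀ x, sgn (ip v x) * sgn (ip w x) = sgn (ip (v + w) x) := by
    intro x; rw [ip_add_left, sgn_add]
  simp only [hs]
  by_cases h : v = w
  · subst h
    have hvv : v + v = 0 := by
      funext s; rcases zmod2_cases (v s) with h | h <;> simp [h] <;> decide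
    simp [hvv, ip_zero_left, sgn_zero]
  · have hvw : v + w ≠ 0 := by
      intro hc
      apply h
      funext s
      have := congrFun hc s
      rcases zmod2_cases (v s) with h1 | h1 <;> rcases zmod2_cases (w s) with h2 | h2 <;>
        simp_all <;> exact absurd this (by decide)
    rw [char_sum_zero _ hvw, if_neg h]

/-- The collision-detection matrix (all-ones first row, then rows of signs
`(-1)^⟨σ_d, j_m⟩` over an enumeration of the coset `{j : H j = k}`) is full rank. -/
theorem stmt11 (n b : ℕ) (hb : b < n)
    (A : Matrix (Fin n) (Fin n) (ZMod 2)) (hA : IsUnit A.det) (k : Fin b → ZMod 2)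
    (e : Fin (2 ^ (n - b)) → (Fin n → ZMod 2)) (he : Function.Injective e)
    (hek : ∀ m, PsiT n b hb.le (Aᵀ.mulVec (e m)) = k) :
    (Matrix.of fun (i : Fin (n - b + 1)) (m : Fin (2 ^ (n - b))) =>
      if _ : (i : ℕ) = 0 then (1 : ℝ)
      else sgn (ip (fun t => A t ⟨(i : ℕ) - 1, by have := i.isLt; omega⟩) (e m))).rank
      = n - b + 1 := by
  have hAT : IsUnit Aᵀ.det := by rwa [Matrix.det_transpose]
  -- the "coordinates" map
  set f : Fin (2 ^ (n - b)) → (Fin (n - b) → ZMod 2) :=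
    fun m d => Aᵀ.mulVec (e m) ⟨(d : ℕ), by have := d.isLt; omega⟩ with hf
  -- f is injective
  have hf_inj : Function.Injective f := by
    intro m m' hmm
    apply he
    have hAe : Aᵀ.mulVec (e m) = Aᵀ.mulVec (e m') := by
      funext i
      by_cases hi : (i : ℕ) < n - b
      · exact congrFun hmm ⟨(i : ℕ), hi⟩
      · have ht : (i : ℕ) - (n - b) < b := by have := i.isLt; omega
        have h1 := congrFun (hek m) ⟨(i : ℕ) - (n - b), ht⟩
        have h2 := congrFun (hek m') ⟨(i : ℕ) - (n - b), ht⟩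
        simp only [PsiT] at h1 h2
        have hidx : (⟨n - b + ((i : ℕ) - (n - b)),
            by have := hb; omega⟩ : Fin n) = i := Fin.ext (by simp; omega)
        rw [hidx] at h1 h2
        rw [h1, h2]
    calc e m = (Aᵀ)⁻¹.mulVec (Aᵀ.mulVec (e m)) := by
          rw [Matrix.mulVec_mulVec, Matrix.nonsing_inv_mul _ hAT, Matrix.one_mulVec]
      _ = (Aᵀ)⁻¹.mulVec (Aᵀ.mulVec (e m')) := by rw [hAe]
      _ = e m' := by
          rw [Matrix.mulVec_mulVec, Matrix.nonsing_inv_mul _ hAT, Matrix.one_mulVec]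
  have hcard : Fintype.card (Fin (n - b) → ZMod 2) = Fintype.card (Fin (2 ^ (n - b))) := by
    simp [Fintype.card_fun]
  have hf_bij : Function.Bijective f :=
    (Fintype.bijective_iff_injective_and_card f).2 ⟨hf_inj, hcard.symm⟩
  -- the frequency vectors
  set u : Fin (n - b + 1) → (Fin (n - b) → ZMod 2) :=
    fun i => if (i : ℕ) = 0 then 0
      else fun d => if (d : ℕ) = (i : ℕ) - 1 then 1 else 0 with hu
  -- u is injective
  have hu_inj : Function.Injective u := by
    intro i i' hii
    by_cases hi : (i : ℕ) = 0 <;> by_cases hi' : (i' : ℕ) = 0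
    · exact Fin.ext (by omega)
    · exfalso
      have hlt : (i' : ℕ) - 1 < n - b := by have := i'.isLt; omega
      have := congrFun hii ⟨(i' : ℕ) - 1, hlt⟩
      simp [hu, Fin.val_eq_zero_iff.mp hi, mt Fin.val_eq_zero_iff.mpr hi'] at this
    · exfalso
      have hlt : (i : ℕ) - 1 < n - b := by have := i.isLt; omega
      have := congrFun hii ⟨(i : ℕ) - 1, hlt⟩
      simp [hu, mt Fin.val_eq_zero_iff.mpr hi, Fin.val_eq_zero_iff.mp hi'] at this
    · have hlt : (i : ℕ) - 1 < n - b := by have := i.isLt; omega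
      have := congrFun hii ⟨(i : ℕ) - 1, hlt⟩
      simp [hu, mt Fin.val_eq_zero_iff.mpr hi, mt Fin.val_eq_zero_iff.mpr hi'] at this
      by_cases hc : ((i : ℕ) - 1 = (i' : ℕ) - 1)
      · exact Fin.ext (by omega)
      · exact absurd this hc
  -- rows
  set R : Fin (n - b + 1) → Fin (2 ^ (n - b)) → ℝ :=
    fun i m => sgn (ip (u i) (f m)) with hR
  -- the matrix equals the row family R
  have hM : (Matrix.of fun (i : Fin (n - b + 1)) (m : Fin (2 ^ (n - b))) =>
      if _ : (i : ℕ) = 0 then (1 : ℝ)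
      else sgn (ip (fun t => A t ⟨(i : ℕ) - 1, by have := i.isLt; omega⟩) (e m)))
      = Matrix.of R := by
    ext i m
    by_cases hi : (i : ℕ) = 0
    · simp [hi, hR, hu, ip_zero_left, sgn_zero, Fin.val_eq_zero_iff.mp hi]
    · simp only [Matrix.of_apply, dif_neg hi, hR, hu, if_neg hi]
      congr 1
      have hlt : (i : ℕ) - 1 < n - b := by have := i.isLt; omega
      have h1 : ip (fun d : Fin (n - b) =>
            if (d : ℕ) = (i : ℕ) - 1 then (1 : ZMod 2) else 0) (f m)
          = f m ⟨(i : ℕ) - 1, hlt⟩ := by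
        have heq : (fun d : Fin (n - b) => if (d : ℕ) = (i : ℕ) - 1 then (1 : ZMod 2) else 0)
            = fun d => if d = (⟨(i : ℕ) - 1, hlt⟩ : Fin (n - b)) then 1 else 0 := by
          funext d; simp [Fin.ext_iff]
        rw [heq, ip_single]
      rw [h1, hf]
      simp [Matrix.mulVec, dotProduct, Matrix.transpose_apply, ip]
  rw [hM]
  -- orthogonality of rows
  have horth : ∀ i i' : Fin (n - b + 1),
      ∑ m, R i m * R i' m = if i = i' then ((2 : ℝ) ^ (n - b)) else 0 := by
    intro i i'
    calc ∑ m, R i m * R i' m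
        = ∑ x : Fin (n - b) → ZMod 2, sgn (ip (u i) x) * sgn (ip (u i') x) :=
          hf_bij.sum_comp (fun x => sgn (ip (u i) x) * sgn (ip (u i') x))
      _ = if u i = u i' then (Fintype.card (Fin (n - b) → ZMod 2) : ℝ) else 0 :=
          char_orth _ _
      _ = if i = i' then ((2 : ℝ) ^ (n - b)) else 0 := by
          by_cases h : i = i'
          · subst h
            simp [Fintype.card_fun]
          · rw [if_neg (fun hc => h (hu_inj hc)), if_neg h]
  -- rows are linearly independent
  have hli : LinearIndependent ℝ R := by
    rw [Fintype.linearIndependent_iff]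
    intro g hg i₀
    have h0 : ∀ m, ∑ i, g i * R i m = 0 := by
      intro m
      have := congrFun hg m
      simpa using this
    have key : (0 : ℝ) = g i₀ * (2 : ℝ) ^ (n - b) := by
      calc (0 : ℝ) = ∑ m, (∑ i, g i * R i m) * R i₀ m := by simp [h0]
        _ = ∑ m, ∑ i, g i * R i m * R i₀ m := by simp [Finset.sum_mul]
        _ = ∑ i, ∑ m, g i * R i m * R i₀ m := Finset.sum_comm
        _ = ∑ i, g i * ∑ m, R i m * R i₀ m := by
            simp_rw [mul_assoc, ← Finset.mul_sum]
        _ = ∑ i, g i * (if i = i₀ then ((2 : ℝ) ^ (n - b)) else 0) := by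
            simp_rw [horth]
        _ = g i₀ * (2 : ℝ) ^ (n - b) := by
            simp [mul_ite, Finset.sum_ite_eq']
    have h2 : (2 : ℝ) ^ (n - b) ≠ 0 := by positivity
    have := key.symm
    rcases mul_eq_zero.mp this with h | h
    · exact h
    · exact absurd h h2
  have hrank : (Matrix.of R).rank = Fintype.card (Fin (n - b + 1)) :=
    LinearIndependent.rank_matrix (M := Matrix.of R) hli
  rw [hrank, Fintype.card_fin]
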